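/- arXiv:1603.07576 — 7 statements merged into one kernel-verified Lean document; each statement's English description precedes it below -/
import Mathlib

section
/- For nonnegative reals p1 < p* and channel gains g1 > g2 > 0 and noise η > 0, one has log(1 + p1·g1/η) + log(1 + (p*−p1)·g2/(p1·g2 + η)) < log(1 + p*·g1/η). That is, allocating all power to the stronger user yields strictly higher sum rate than splitting power between two users on one channel. -/
/-- Allocating all power to the stronger user yields strictly higher sum rate
than splitting power between two users on one channel. -/
theorem noma_single_user_better (g1 g2 η p1 pstar : ℝ)
    (hg : g1 > g2) (hg2 : g2 > 0) (hη : η > 0) (hp1 : 0 ≤ p1) (hlt : p1 < pstar) :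
    Real.log (1 + p1 * g1 / η) +
      Real.log (1 + (pstar - p1) * g2 / (p1 * g2 + η)) <
    Real.log (1 + pstar * g1 / η) := by
  have hg1 : 0 < g1 := lt_trans hg2 hg
  have hd : 0 < p1 * g2 + η := by positivity
  have hA : 0 < 1 + p1 * g1 / η := by positivity
  have hB : 0 < 1 + (pstar - p1) * g2 / (p1 * g2 + η) := by
    have : 0 ≤ (pstar - p1) * g2 / (p1 * g2 + η) := by
      apply div_nonneg _ hd.le
      nlinarith
    linarith
  rw [← Real.log_mul (ne_of_gt hA) (ne_of_gt hB)]
  apply Real.log_lt_log (by positivity)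
  have e1 : 1 + p1 * g1 / η = (η + p1 * g1) / η := by field_simp
  have e2 : 1 + (pstar - p1) * g2 / (p1 * g2 + η) = (pstar * g2 + η) / (p1 * g2 + η) := by
    field_simp; ring
  have e3 : 1 + pstar * g1 / η = (η + pstar * g1) / η := by field_simp
  rw [e1, e2, e3, div_mul_div_comm, div_lt_div_iff₀ (by positivity) hη]
  nlinarith [mul_pos hη (mul_pos (sub_pos.2 hlt) (sub_pos.2 hg)),
    mul_nonneg (mul_nonneg hp1 (sq_nonneg g1)) (sub_pos.2 hlt).le,
    mul_nonneg hp1 (mul_pos (sub_pos.2 hlt) (sub_pos.2 hg)).le]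
end

section
/- For the single-carrier NOMA sum-rate utility f(p1,…,pK) with g1 ≥ g2 ≥ … ≥ gK > 0, the partial derivatives satisfy ∂f/∂p_1 ≥ ∂f/∂p_2 ≥ … ≥ ∂f/∂p_K > 0 at every point with nonnegative powers. -/
open Finset

noncomputable def nomaGrad (K : ℕ) (g : Fin K → ℝ) (η : ℝ) (p : Fin K → ℝ) (j : Fin K) : ℝ :=
  ∑ k : Fin K,
    ((if j ≤ k then g k / ((∑ h ∈ Finset.Iio k, p h * g k) + η + p k * g k) else 0)
      - (if j < k then g k / ((∑ h ∈ Finset.Iio k, p h * g k) + η) else 0))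

lemma noma_grad_formula (K : ℕ) (g : Fin K → ℝ) (η : ℝ)
    (f : (Fin K → ℝ) → ℝ)
    (hf : ∀ p : Fin K → ℝ, f p =
      ∑ k : Fin K,
        Real.log (1 + p k * g k / ((∑ h ∈ Finset.Iio k, p h * g k) + η)))
    (p : Fin K → ℝ)
    (hden : ∀ k, 0 < (∑ h ∈ Finset.Iio k, p h * g k) + η)
    (hnum : ∀ k, 0 < (∑ h ∈ Finset.Iio k, p h * g k) + η + p k * g k)
    (j : Fin K) :
    fderiv ℝ f p (Pi.single j 1) = nomaGrad K g η p j := by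
  classical
  -- derivative CLMs
  set L : Fin K → (Fin K → ℝ) →L[ℝ] ℝ := fun k =>
    ∑ h ∈ Finset.Iio k, (g k) • (ContinuousLinearMap.proj h : (Fin K → ℝ) →L[ℝ] ℝ) with hL
  set M : Fin K → (Fin K → ℝ) →L[ℝ] ℝ := fun k =>
    L k + (g k) • (ContinuousLinearMap.proj k : (Fin K → ℝ) →L[ℝ] ℝ) with hM
  have hasDen : ∀ (k : Fin K) (q : Fin K → ℝ),
      HasFDerivAt (fun q : Fin K → ℝ => (∑ h ∈ Finset.Iio k, q h * g k) + η) (L k) q := by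
    intro k q
    have h1 : HasFDerivAt (fun q : Fin K → ℝ => ∑ h ∈ Finset.Iio k, q h * g k) (L k) q :=
      HasFDerivAt.fun_sum fun h _ =>
        ((ContinuousLinearMap.proj h : (Fin K → ℝ) →L[ℝ] ℝ).hasFDerivAt.mul_const (g k))
    exact h1.add_const η
  have hasNum : ∀ (k : Fin K) (q : Fin K → ℝ),
      HasFDerivAt (fun q : Fin K → ℝ => ((∑ h ∈ Finset.Iio k, q h * g k) + η) + q k * g k)
        (M k) q := by
    intro k q
    exact (hasDen k q).add
      ((ContinuousLinearMap.proj k : (Fin K → ℝ) →L[ℝ] ℝ).hasFDerivAt.mul_const (g k))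
  set D : Fin K → (Fin K → ℝ) →L[ℝ] ℝ := fun k =>
    (((∑ h ∈ Finset.Iio k, p h * g k) + η + p k * g k)⁻¹ • M k)
      - (((∑ h ∈ Finset.Iio k, p h * g k) + η)⁻¹ • L k) with hD
  have hasG : HasFDerivAt (fun q : Fin K → ℝ => ∑ k : Fin K,
      (Real.log ((∑ h ∈ Finset.Iio k, q h * g k) + η + q k * g k)
        - Real.log ((∑ h ∈ Finset.Iio k, q h * g k) + η))) (∑ k : Fin K, D k) p := by
    refine HasFDerivAt.fun_sum fun k _ => ?_
    exact ((hasNum k p).log (hnum k).ne').sub ((hasDen k p).log (hden k).ne')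
  have hev : f =ᶠ[nhds p] (fun q : Fin K → ℝ => ∑ k : Fin K,
      (Real.log ((∑ h ∈ Finset.Iio k, q h * g k) + η + q k * g k)
        - Real.log ((∑ h ∈ Finset.Iio k, q h * g k) + η))) := by
    have hevpos : ∀ᶠ q in nhds p, ∀ k : Fin K,
        0 < (∑ h ∈ Finset.Iio k, q h * g k) + η ∧
        0 < (∑ h ∈ Finset.Iio k, q h * g k) + η + q k * g k := by
      rw [Filter.eventually_all]
      intro k
      have e1 : ∀ᶠ q in nhds p, 0 < (∑ h ∈ Finset.Iio k, q h * g k) + η :=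
        Filter.Tendsto.eventually (hasDen k p).continuousAt (eventually_gt_nhds (hden k))
      have e2 : ∀ᶠ q in nhds p, 0 < (∑ h ∈ Finset.Iio k, q h * g k) + η + q k * g k :=
        Filter.Tendsto.eventually (hasNum k p).continuousAt (eventually_gt_nhds (hnum k))
      exact e1.and e2
    filter_upwards [hevpos] with q hq
    rw [hf q]
    refine Finset.sum_congr rfl fun k _ => ?_
    have hd := (hq k).1
    have hn := (hq k).2
    have h1 : 1 + q k * g k / ((∑ h ∈ Finset.Iio k, q h * g k) + η)
        = ((∑ h ∈ Finset.Iio k, q h * g k) + η + q k * g k)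
          / ((∑ h ∈ Finset.Iio k, q h * g k) + η) := by
      rw [add_div, div_self hd.ne']
    rw [h1, Real.log_div hn.ne' hd.ne']
  rw [hev.fderiv_eq, hasG.fderiv]
  -- evaluate
  rw [ContinuousLinearMap.sum_apply]
  refine Finset.sum_congr rfl fun k _ => ?_
  have hLapp : L k (Pi.single j 1) = if j < k then g k else 0 := by
    rw [hL]
    simp only [ContinuousLinearMap.sum_apply, ContinuousLinearMap.smul_apply,
      ContinuousLinearMap.proj_apply, Pi.single_apply, smul_eq_mul, mul_ite, mul_one, mul_zero,
      Finset.sum_ite_eq', Finset.mem_Iio]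
  have hMapp : M k (Pi.single j 1) = (if j < k then g k else 0) + (if k = j then g k else 0) := by
    rw [hM]
    simp only [ContinuousLinearMap.add_apply, ContinuousLinearMap.smul_apply,
      ContinuousLinearMap.proj_apply, Pi.single_apply, smul_eq_mul, mul_ite, mul_one, mul_zero,
      hLapp]
  rw [hD]
  simp only [ContinuousLinearMap.sub_apply, ContinuousLinearMap.smul_apply, smul_eq_mul,
    hLapp, hMapp]
  simp only [Fin.lt_def, Fin.le_def, Fin.ext_iff, div_eq_inv_mul]
  split_ifs <;> first | ring1 | (exfalso; omega)

lemma nomaGrad_adj (K : ℕ) (g : Fin K → ℝ) (η : ℝ) (p : Fin K → ℝ)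
    (hg : ∀ k, 0 < g k) (hsort : ∀ k l : Fin K, k ≤ l → g l ≤ g k) (hη : 0 < η)
    (hp : ∀ k, 0 ≤ p k) (j j' : Fin K) (hjj : (j' : ℕ) = (j : ℕ) + 1) :
    nomaGrad K g η p j' ≤ nomaGrad K g η p j := by
  classical
  set A : Fin K → ℝ := fun k => g k / ((∑ h ∈ Finset.Iio k, p h * g k) + η + p k * g k) with hA
  set B : Fin K → ℝ := fun k => g k / ((∑ h ∈ Finset.Iio k, p h * g k) + η) with hB
  have key : nomaGrad K g η p j - nomaGrad K g η p j' = A j - B j' := by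
    unfold nomaGrad
    rw [← Finset.sum_sub_distrib]
    have hcongr : ∀ k ∈ Finset.univ, ((if j ≤ k then g k / ((∑ h ∈ Finset.Iio k, p h * g k) + η + p k * g k) else 0)
          - (if j < k then g k / ((∑ h ∈ Finset.Iio k, p h * g k) + η) else 0))
        - ((if j' ≤ k then g k / ((∑ h ∈ Finset.Iio k, p h * g k) + η + p k * g k) else 0)
          - (if j' < k then g k / ((∑ h ∈ Finset.Iio k, p h * g k) + η) else 0))
        = (if k = j then A k else 0) - (if k = j' then B k else 0) := by
      intro k _
      simp only [hA, hB]
      simp only [Fin.lt_def, Fin.le_def, Fin.ext_iff]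
      split_ifs <;> first | ring1 | (exfalso; omega)
    rw [Finset.sum_congr rfl hcongr, Finset.sum_sub_distrib, Finset.sum_ite_eq',
      Finset.sum_ite_eq', if_pos (Finset.mem_univ j), if_pos (Finset.mem_univ j')]
  have hineq : B j' ≤ A j := by
    simp only [hA, hB]
    have hIio : Finset.Iio j' = insert j (Finset.Iio j) := by
      ext h
      simp only [Finset.mem_Iio, Finset.mem_insert, Fin.lt_def, Fin.ext_iff, hjj]
      omega
    set T : ℝ := ∑ h ∈ Finset.Iio j', p h with hT
    have hTsum : T = (∑ h ∈ Finset.Iio j, p h) + p j := by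
      rw [hT, hIio, Finset.sum_insert (by simp)]
      ring
    have e1 : (∑ h ∈ Finset.Iio j', p h * g j') + η = T * g j' + η := by
      rw [hT, Finset.sum_mul]
    have e2 : (∑ h ∈ Finset.Iio j, p h * g j) + η + p j * g j = T * g j + η := by
      rw [hTsum, add_mul, Finset.sum_mul]
      ring
    rw [e1, e2]
    have hT0 : 0 ≤ T := Finset.sum_nonneg fun h _ => hp h
    have hgj := hg j
    have hgj' := hg j'
    have hle : g j' ≤ g j := hsort j j' (by rw [Fin.le_def]; omega)
    rw [div_le_div_iff₀ (by nlinarith) (by nlinarith)]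
    nlinarith
  linarith

lemma nomaGrad_pos_last (K : ℕ) (g : Fin K → ℝ) (η : ℝ) (p : Fin K → ℝ)
    (hg : ∀ k, 0 < g k) (hη : 0 < η) (hp : ∀ k, 0 ≤ p k)
    (j : Fin K) (hj : (j : ℕ) + 1 = K) : 0 < nomaGrad K g η p j := by
  classical
  have hval : nomaGrad K g η p j
      = ∑ k : Fin K, (if k = j then g k / ((∑ h ∈ Finset.Iio k, p h * g k) + η + p k * g k) else 0) := by
    unfold nomaGrad
    refine Finset.sum_congr rfl fun k _ => ?_
    have hk := k.isLt
    simp only [Fin.lt_def, Fin.le_def, Fin.ext_iff]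
    split_ifs <;> first | ring1 | (exfalso; omega)
  rw [hval, Finset.sum_ite_eq', if_pos (Finset.mem_univ j)]
  have hden : 0 < (∑ h ∈ Finset.Iio j, p h * g j) + η + p j * g j := by
    have h1 : 0 ≤ ∑ h ∈ Finset.Iio j, p h * g j :=
      Finset.sum_nonneg fun h _ => mul_nonneg (hp h) (hg j).le
    have h2 : 0 ≤ p j * g j := mul_nonneg (hp j) (hg j).le
    linarith
  exact div_pos (hg j) hden

/-- For the single-carrier NOMA sum rate with descending gains, the partial
derivatives are ordered `∂f/∂p_1 ≥ ⋯ ≥ ∂f/∂p_K > 0` at every nonnegative point. -/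
theorem noma_partial_derivatives_ordered (K : ℕ) (g : Fin K → ℝ) (η : ℝ)
    (hg : ∀ k, 0 < g k) (hsort : ∀ k l : Fin K, k ≤ l → g l ≤ g k) (hη : 0 < η)
    (f : (Fin K → ℝ) → ℝ)
    (hf : ∀ p : Fin K → ℝ, f p =
      ∑ k : Fin K,
        Real.log (1 + p k * g k / ((∑ h ∈ Finset.Iio k, p h * g k) + η)))
    (p : Fin K → ℝ) (hp : ∀ k, 0 ≤ p k) :
    (∀ k l : Fin K, k ≤ l →
        fderiv ℝ f p (Pi.single l 1) ≤ fderiv ℝ f p (Pi.single k 1)) ∧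
    (∀ k : Fin K, 0 < fderiv ℝ f p (Pi.single k 1)) := by
  have hden : ∀ k : Fin K, 0 < (∑ h ∈ Finset.Iio k, p h * g k) + η := by
    intro k
    have h1 : 0 ≤ ∑ h ∈ Finset.Iio k, p h * g k :=
      Finset.sum_nonneg fun h _ => mul_nonneg (hp h) (hg k).le
    linarith
  have hnum : ∀ k : Fin K, 0 < (∑ h ∈ Finset.Iio k, p h * g k) + η + p k * g k := by
    intro k
    have h2 : 0 ≤ p k * g k := mul_nonneg (hp k) (hg k).le
    have := hden k
    linarith
  have hform : ∀ j : Fin K, fderiv ℝ f p (Pi.single j 1) = nomaGrad K g η p j :=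
    noma_grad_formula K g η f hf p hden hnum
  have hmono : ∀ (n : ℕ) (k : Fin K) (h : (k : ℕ) + n < K),
      nomaGrad K g η p ⟨(k : ℕ) + n, h⟩ ≤ nomaGrad K g η p k := by
    intro n
    induction n with
    | zero =>
      intro k h
      have : (⟨(k : ℕ) + 0, h⟩ : Fin K) = k := Fin.ext (by simp)
      rw [this]
    | succ n ih =>
      intro k h
      have h' : (k : ℕ) + n < K := by omega
      calc nomaGrad K g η p ⟨(k : ℕ) + (n + 1), h⟩
          ≤ nomaGrad K g η p ⟨(k : ℕ) + n, h'⟩ :=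
            nomaGrad_adj K g η p hg hsort hη hp ⟨(k : ℕ) + n, h'⟩
              ⟨(k : ℕ) + (n + 1), h⟩ (by simp; omega)
        _ ≤ nomaGrad K g η p k := ih k h'
  have hpos : ∀ (n : ℕ) (j : Fin K), (j : ℕ) + n + 1 = K → 0 < nomaGrad K g η p j := by
    intro n
    induction n with
    | zero =>
      intro j hj
      exact nomaGrad_pos_last K g η p hg hη hp j (by omega)
    | succ n ih =>
      intro j hj
      have hj1 : (j : ℕ) + 1 < K := by omega
      have h1 : 0 < nomaGrad K g η p ⟨(j : ℕ) + 1, hj1⟩ := ih ⟨(j : ℕ) + 1, hj1⟩ (by simp; omega)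
      have h2 := nomaGrad_adj K g η p hg hsort hη hp j ⟨(j : ℕ) + 1, hj1⟩ rfl
      linarith
  constructor
  · intro k l hkl
    rw [hform k, hform l]
    have hkl' : (k : ℕ) ≤ (l : ℕ) := hkl
    have hl : (k : ℕ) + ((l : ℕ) - (k : ℕ)) < K := by have := l.isLt; omega
    have : (⟨(k : ℕ) + ((l : ℕ) - (k : ℕ)), hl⟩ : Fin K) = l := Fin.ext (by simp; omega)
    calc nomaGrad K g η p l = nomaGrad K g η p ⟨(k : ℕ) + ((l : ℕ) - (k : ℕ)), hl⟩ := by rw [this]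
      _ ≤ nomaGrad K g η p k := hmono _ k hl
  · intro k
    rw [hform k]
    exact hpos (K - 1 - (k : ℕ)) k (by have := k.isLt; omega)
end

section
/- For single-carrier NOMA sum-rate maximization subject only to a total power constraint Σ_k p_k ≤ P_tot (no per-user limits), the allocation p_1 = P_tot, p_2 = … = p_K = 0 is optimal, i.e., f(P_tot, 0, …, 0) ≥ f(p) for every feasible nonnegative p. -/
open Finset

lemma noma_ratio_mono (η gk g0 a b : ℝ) (hη : 0 < η) (hg : 0 < gk) (hgg : gk ≤ g0)
    (hb : 0 ≤ b) (hab : b ≤ a) :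
    (a * gk + η) / (b * gk + η) ≤ (a * g0 + η) / (b * g0 + η) := by
  have h1 : 0 < b * gk + η := by nlinarith
  have h2 : 0 < b * g0 + η := by nlinarith
  rw [div_le_div_iff₀ h1 h2]
  nlinarith [mul_nonneg (mul_nonneg hη.le (sub_nonneg.2 hab)) (sub_nonneg.2 hgg)]

/-- Lemma 1: with only a total power constraint, giving all power to the user
with the best gain is optimal for the single-carrier NOMA sum rate. -/
theorem noma_all_power_to_best_user_optimal (K : ℕ) (hK : 0 < K)
    (g : Fin K → ℝ) (η Ptot : ℝ)
    (hg : ∀ k, 0 < g k) (hsort : ∀ k l : Fin K, k ≤ l → g l ≤ g k)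
    (hη : 0 < η) (hP : 0 < Ptot)
    (f : (Fin K → ℝ) → ℝ)
    (hf : ∀ p : Fin K → ℝ, f p =
      ∑ k : Fin K,
        Real.log (1 + p k * g k / ((∑ h ∈ Finset.Iio k, p h * g k) + η))) :
    ∀ p : Fin K → ℝ, (∀ k, 0 ≤ p k) → (∑ k, p k) ≤ Ptot →
      f p ≤ f (fun k => if k = ⟨0, hK⟩ then Ptot else 0) := by
  intro p hp hsum
  set g0 := g ⟨0, hK⟩ with hg0def
  have hg0 : 0 < g0 := hg _
  set q : ℕ → ℝ := fun n => if h : n < K then p ⟨n, h⟩ else 0 with hq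
  have hq0 : ∀ n, 0 ≤ q n := by
    intro n; simp only [hq]
    split
    · exact hp _
    · exact le_refl 0
  set S : ℕ → ℝ := fun n => ∑ i ∈ Finset.range n, q i with hS
  have hS0 : ∀ n, 0 ≤ S n := fun n => Finset.sum_nonneg (fun i _ => hq0 i)
  have hSsucc : ∀ n, S (n + 1) = S n + q n := by
    intro n; simp [hS, Finset.sum_range_succ]
  have hSmono : ∀ n, S n ≤ S (n + 1) := by
    intro n; rw [hSsucc]; linarith [hq0 n]
  have hinner : ∀ k : Fin K, (∑ h ∈ Finset.Iio k, p h) = S k.val := by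
    intro k
    simp only [hS]
    rw [← Nat.Iio_eq_range, ← Fin.map_valEmbedding_Iio, Finset.sum_map]
    refine Finset.sum_congr rfl ?_
    intro h _
    simp [hq, h.isLt]
  have hSK : S K ≤ Ptot := by
    have hSKeq : S K = ∑ k : Fin K, p k := by
      simp only [hS]
      rw [← Fin.sum_univ_eq_sum_range (fun i => q i) K]
      exact Finset.sum_congr rfl (fun i _ => by simp [hq, i.isLt])
    linarith
  -- target value
  have htarget : f (fun k => if k = ⟨0, hK⟩ then Ptot else 0)
      = Real.log ((Ptot * g0 + η) / η) := by
    rw [hf]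
    rw [Finset.sum_eq_single (⟨0, hK⟩ : Fin K)]
    · have hIio : Finset.Iio (⟨0, hK⟩ : Fin K) = ∅ := by
        ext x; simp [Fin.lt_def]
      rw [hIio]
      simp only [Finset.sum_empty, zero_add]
      rw [if_pos trivial, hg0def]
      congr 1
      field_simp
      ring
    · intro b _ hb
      simp [hb]
    · intro h; exact absurd (Finset.mem_univ _) h
  rw [htarget, hf]
  -- bound each term
  set L : ℕ → ℝ := fun n => Real.log (S n * g0 + η) with hL
  have hpos : ∀ n, 0 < S n * g0 + η := by
    intro n; nlinarith [mul_nonneg (hS0 n) hg0.le]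
  have hstep : ∀ k : Fin K,
      Real.log (1 + p k * g k / ((∑ h ∈ Finset.Iio k, p h * g k) + η))
        ≤ L (k.val + 1) - L k.val := by
    intro k
    have hIsum : (∑ h ∈ Finset.Iio k, p h * g k) = S k.val * g k := by
      rw [← Finset.sum_mul, hinner]
    have hqk : q k.val = p k := by simp [hq, k.isLt]
    have hgk : 0 < g k := hg k
    have hgle : g k ≤ g0 := hsort ⟨0, hK⟩ k (Fin.mk_le_of_le_val (Nat.zero_le _))
    have hd : 0 < S k.val * g k + η := by nlinarith [hS0 k.val]
    have h1 : 1 + p k * g k / (S k.val * g k + η)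
        = (S (k.val + 1) * g k + η) / (S k.val * g k + η) := by
      rw [hSsucc, hqk]
      rw [eq_div_iff hd.ne', add_mul, div_mul_cancel₀ _ hd.ne']
      ring
    rw [hIsum, h1]
    have h2 : (S (k.val + 1) * g k + η) / (S k.val * g k + η)
        ≤ (S (k.val + 1) * g0 + η) / (S k.val * g0 + η) :=
      noma_ratio_mono η (g k) g0 _ _ hη hgk hgle (hS0 _) (hSmono _)
    have h3 : Real.log ((S (k.val + 1) * g k + η) / (S k.val * g k + η))
        ≤ Real.log ((S (k.val + 1) * g0 + η) / (S k.val * g0 + η)) := by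
      apply Real.log_le_log (div_pos (by nlinarith [mul_nonneg (hS0 (k.val+1)) hgk.le]) hd) h2
    refine h3.trans_eq ?_
    rw [Real.log_div (ne_of_gt (hpos _)) (ne_of_gt (hpos _))]
  calc (∑ k : Fin K, Real.log (1 + p k * g k / ((∑ h ∈ Finset.Iio k, p h * g k) + η)))
      ≤ ∑ k : Fin K, (L (k.val + 1) - L k.val) := Finset.sum_le_sum (fun k _ => hstep k)
    _ = ∑ n ∈ Finset.range K, (L (n + 1) - L n) :=
        Fin.sum_univ_eq_sum_range (fun n => L (n + 1) - L n) K
    _ = L K - L 0 := Finset.sum_range_sub L K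
    _ ≤ Real.log ((Ptot * g0 + η) / η) := by
        have hL0 : L 0 = Real.log η := by simp [hL, hS]
        have hLK : L K ≤ Real.log (Ptot * g0 + η) := by
          apply Real.log_le_log (hpos K)
          nlinarith [hSK]
        rw [hL0, Real.log_div (by positivity) (ne_of_gt hη)]
        linarith
end

section
/- For two users on one subcarrier with gains g1 > g2 > 0, powers p1 > 0, p2 > 0, total p* = p1 + p2, the sum of the two users' NOMA rates R^(2) = log((p1·g1+η)/η) + log((p*·g2+η)/(p1·g2+η)) is strictly less than the single-user rate R^(1) = log((p*·g1+η)/η), and hence R^(2) − R^(1) = log( (p1·g1·p*·g2 + p1·g1·η + p*·g2·η + η²) / (p1·g1·p*·g2 + p*·g1·η + p1·g2·η + η²) ) < 0. -/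
/-- Core computation of Lemma 2: the two-user NOMA sum rate is strictly below
the single-user rate, expressed via the quotient of log arguments. -/
theorem noma_two_user_below_oma (g1 g2 η p1 p2 : ℝ)
    (hg : g1 > g2) (hg2 : g2 > 0) (hη : η > 0) (hp1 : 0 < p1) (hp2 : 0 < p2) :
    (Real.log ((p1 * g1 + η) / η) +
        Real.log (((p1 + p2) * g2 + η) / (p1 * g2 + η))
      < Real.log (((p1 + p2) * g1 + η) / η)) ∧
    (Real.log ((p1 * g1 + η) / η) +
        Real.log (((p1 + p2) * g2 + η) / (p1 * g2 + η))
      - Real.log (((p1 + p2) * g1 + η) / η)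
      = Real.log ((p1 * g1 * ((p1 + p2) * g2) + p1 * g1 * η + (p1 + p2) * g2 * η + η ^ 2)
          / (p1 * g1 * ((p1 + p2) * g2) + (p1 + p2) * g1 * η + p1 * g2 * η + η ^ 2))) ∧
    Real.log ((p1 * g1 * ((p1 + p2) * g2) + p1 * g1 * η + (p1 + p2) * g2 * η + η ^ 2)
        / (p1 * g1 * ((p1 + p2) * g2) + (p1 + p2) * g1 * η + p1 * g2 * η + η ^ 2)) < 0 := by
  have hg1 : 0 < g1 := lt_trans hg2 hg
  have hA : (0:ℝ) < p1 * g1 + η := by positivity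
  have hB : (0:ℝ) < (p1 + p2) * g2 + η := by positivity
  have hB' : (0:ℝ) < p1 * g2 + η := by positivity
  have hC : (0:ℝ) < (p1 + p2) * g1 + η := by positivity
  have hN : (0:ℝ) < p1 * g1 * ((p1 + p2) * g2) + p1 * g1 * η + (p1 + p2) * g2 * η + η ^ 2 := by
    positivity
  have hD : (0:ℝ) < p1 * g1 * ((p1 + p2) * g2) + (p1 + p2) * g1 * η + p1 * g2 * η + η ^ 2 := by
    positivity
  have hND : p1 * g1 * ((p1 + p2) * g2) + p1 * g1 * η + (p1 + p2) * g2 * η + η ^ 2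
      < p1 * g1 * ((p1 + p2) * g2) + (p1 + p2) * g1 * η + p1 * g2 * η + η ^ 2 := by
    nlinarith [mul_pos hp2 hη, sub_pos.mpr hg]
  have hlogneg : Real.log ((p1 * g1 * ((p1 + p2) * g2) + p1 * g1 * η + (p1 + p2) * g2 * η + η ^ 2)
        / (p1 * g1 * ((p1 + p2) * g2) + (p1 + p2) * g1 * η + p1 * g2 * η + η ^ 2)) < 0 := by
    apply Real.log_neg
    · positivity
    · rw [div_lt_one hD]; exact hND
  have heq : Real.log ((p1 * g1 + η) / η) +
        Real.log (((p1 + p2) * g2 + η) / (p1 * g2 + η))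
      - Real.log (((p1 + p2) * g1 + η) / η)
      = Real.log ((p1 * g1 * ((p1 + p2) * g2) + p1 * g1 * η + (p1 + p2) * g2 * η + η ^ 2)
          / (p1 * g1 * ((p1 + p2) * g2) + (p1 + p2) * g1 * η + p1 * g2 * η + η ^ 2)) := by
    rw [Real.log_div hA.ne' hη.ne', Real.log_div hB.ne' hB'.ne',
        Real.log_div hC.ne' hη.ne', Real.log_div hN.ne' hD.ne']
    have e1 : p1 * g1 * ((p1 + p2) * g2) + p1 * g1 * η + (p1 + p2) * g2 * η + η ^ 2
        = (p1 * g1 + η) * ((p1 + p2) * g2 + η) := by ring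
    have e2 : p1 * g1 * ((p1 + p2) * g2) + (p1 + p2) * g1 * η + p1 * g2 * η + η ^ 2
        = ((p1 + p2) * g1 + η) * (p1 * g2 + η) := by ring
    rw [e1, e2, Real.log_mul hA.ne' hB.ne', Real.log_mul hC.ne' hB'.ne']
    ring
  exact ⟨by linarith, heq, hlogneg⟩
end

section
/- In two-user single-carrier NOMA with gains g1 ≥ g2 and SIC, for any total power p* ≥ 0 the sum rate log(1 + p1 g1/η) + log(1 + p2 g2/(p1 g2 + η)) subject to p1 + p2 = p*, p1, p2 ≥ 0 is maximized at p1 = p*, and its maximum value equals log(1 + p*·g1/η). -/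
/-- Two-user single-carrier NOMA: for fixed total power `p*`, the sum rate is
maximized by giving everything to the stronger user, with maximum value
`log(1 + p* g1 / η)`. -/
theorem noma_two_user_max_at_strong (g1 g2 η pstar : ℝ)
    (hg : g2 ≤ g1) (hg2 : 0 < g2) (hη : 0 < η) (hp : 0 ≤ pstar) :
    (∀ p1 p2 : ℝ, 0 ≤ p1 → 0 ≤ p2 → p1 + p2 = pstar →
        Real.log (1 + p1 * g1 / η) + Real.log (1 + p2 * g2 / (p1 * g2 + η))
          ≤ Real.log (1 + pstar * g1 / η)) ∧
    Real.log (1 + pstar * g1 / η) + Real.log (1 + 0 * g2 / (pstar * g2 + η))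
      = Real.log (1 + pstar * g1 / η) := by
  constructor
  · intro p1 p2 hp1 hp2 hsum
    have hg1 : 0 < g1 := lt_of_lt_of_le hg2 hg
    have hd : 0 < p1 * g2 + η := by positivity
    have ha : 0 < 1 + p1 * g1 / η := by positivity
    have hb : 0 < 1 + p2 * g2 / (p1 * g2 + η) := by positivity
    have hmul : (1 + p1 * g1 / η) * (1 + p2 * g2 / (p1 * g2 + η))
        ≤ 1 + pstar * g1 / η := by
      rw [← sub_nonneg]
      have heq : 1 + pstar * g1 / η - (1 + p1 * g1 / η) * (1 + p2 * g2 / (p1 * g2 + η))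
          = η * (p2 * (g1 - g2)) / (η * (p1 * g2 + η)) := by
        subst hsum
        field_simp
        ring
      rw [heq]
      have h2 : 0 ≤ p2 * (g1 - g2) := mul_nonneg hp2 (sub_nonneg.mpr hg)
      positivity
    calc Real.log (1 + p1 * g1 / η) + Real.log (1 + p2 * g2 / (p1 * g2 + η))
        = Real.log ((1 + p1 * g1 / η) * (1 + p2 * g2 / (p1 * g2 + η))) :=
          (Real.log_mul ha.ne' hb.ne').symm
      _ ≤ Real.log (1 + pstar * g1 / η) :=
          Real.log_le_log (by positivity) hmul
  · simp
end

section
/- Let f(p1,…,pK) be the single-carrier NOMA sum rate with gains g1 ≥ … ≥ gK > 0 and η > 0. If at some feasible point p we have p_k < P_k and p_h > 0 for indices k < h, then transferring a small amount ε > 0 of power from user h to user k (p_k + ε, p_h − ε, ε ≤ min(P_k − p_k, p_h)) does not decrease f. -/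
open Finset

private noncomputable def Fsum (K : ℕ) (g : Fin K → ℝ) (η : ℝ) (p : Fin K → ℝ) : ℝ :=
  ∑ m : Fin K, (Real.log (((∑ j ∈ Finset.Iio m, p j) + p m) * g m + η)
      - Real.log ((∑ j ∈ Finset.Iio m, p j) * g m + η))

private lemma key_log (S ε η g g' : ℝ) (hS : 0 ≤ S) (hε : 0 < ε) (hη : 0 < η)
    (hg' : 0 < g') (hgg : g' ≤ g) :
    Real.log ((S + ε) * g' + η) - Real.log (S * g' + η)
      ≤ Real.log ((S + ε) * g + η) - Real.log (S * g + η) := by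
  have hg : 0 < g := lt_of_lt_of_le hg' hgg
  have h1 : 0 < (S + ε) * g' + η := by positivity
  have h2 : 0 < S * g' + η := by positivity
  have h3 : 0 < (S + ε) * g + η := by positivity
  have h4 : 0 < S * g + η := by positivity
  rw [sub_le_sub_iff, ← Real.log_mul h1.ne' h4.ne', ← Real.log_mul h3.ne' h2.ne']
  apply Real.log_le_log (by positivity)
  nlinarith [mul_nonneg (mul_nonneg hη.le hε.le) (sub_nonneg.2 hgg)]

private lemma sum_upd {K : ℕ} (p : Fin K → ℝ) (ε : ℝ) (k h : Fin K) (hkh : k ≠ h)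
    (s : Finset (Fin K)) :
    ∑ j ∈ s, (Function.update (Function.update p k (p k + ε)) h (p h - ε)) j
      = (∑ j ∈ s, p j) + (if k ∈ s then ε else 0) - (if h ∈ s then ε else 0) := by
  have key : ∀ j, (Function.update (Function.update p k (p k + ε)) h (p h - ε)) j
      = p j + (if j = k then ε else 0) - (if j = h then ε else 0) := by
    intro j
    rcases eq_or_ne j h with rfl | hjh
    · simp [Function.update_apply, hkh.symm, (Ne.symm hkh)]
    · rcases eq_or_ne j k with rfl | hjk
      · simp [Function.update_apply, hjh]
      · simp [Function.update_apply, hjh, hjk]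
  simp only [key]
  rw [Finset.sum_sub_distrib, Finset.sum_add_distrib, Finset.sum_ite_eq' s k,
    Finset.sum_ite_eq' s h]

private lemma upd_nonneg {K : ℕ} (p : Fin K → ℝ) (ε : ℝ) (k h : Fin K)
    (hp0 : ∀ j, 0 ≤ p j) (hε : 0 ≤ ε) (hεh : ε ≤ p h) :
    ∀ j, 0 ≤ (Function.update (Function.update p k (p k + ε)) h (p h - ε)) j := by
  intro j
  by_cases hjh : j = h
  · subst hjh; simp; linarith
  · by_cases hjk : j = k
    · have heq : (Function.update (Function.update p k (p k + ε)) h (p h - ε)) j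
          = p k + ε := by
        rw [Function.update_apply, if_neg hjh, hjk, Function.update_self]
      rw [heq]
      linarith [hp0 k]
    · simp [Function.update_apply, hjh, hjk]
      exact hp0 j

private lemma f_eq (K : ℕ) (g : Fin K → ℝ) (η : ℝ) (hg : ∀ k, 0 < g k) (hη : 0 < η)
    (p : Fin K → ℝ) (hp0 : ∀ k, 0 ≤ p k) :
    ∑ m : Fin K, Real.log (1 + p m * g m / ((∑ j ∈ Finset.Iio m, p j * g m) + η))
      = Fsum K g η p := by
  refine Finset.sum_congr rfl fun m _ => ?_
  have hS : 0 ≤ ∑ j ∈ Finset.Iio m, p j := Finset.sum_nonneg fun j _ => hp0 j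
  have hgm := hg m
  have hpm := hp0 m
  have hD : 0 < (∑ j ∈ Finset.Iio m, p j) * g m + η := by positivity
  have hN : 0 < ((∑ j ∈ Finset.Iio m, p j) + p m) * g m + η := by positivity
  have hsum : ∑ j ∈ Finset.Iio m, p j * g m = (∑ j ∈ Finset.Iio m, p j) * g m :=
    (Finset.sum_mul ..).symm
  rw [hsum]
  have harg : 1 + p m * g m / ((∑ j ∈ Finset.Iio m, p j) * g m + η)
      = (((∑ j ∈ Finset.Iio m, p j) + p m) * g m + η)
        / ((∑ j ∈ Finset.Iio m, p j) * g m + η) := by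
    field_simp
    ring
  rw [harg, Real.log_div hN.ne' hD.ne']

private lemma adjacent (K : ℕ) (g : Fin K → ℝ) (η : ℝ)
    (hg : ∀ k, 0 < g k) (hsort : ∀ k l : Fin K, k ≤ l → g l ≤ g k) (hη : 0 < η)
    (p : Fin K → ℝ) (hp0 : ∀ j, 0 ≤ p j) (ε : ℝ) (hε : 0 < ε)
    (k h : Fin K) (hkh : k < h) (hadj : (h : ℕ) = (k : ℕ) + 1) (hεh : ε ≤ p h) :
    Fsum K g η p ≤ Fsum K g η (Function.update (Function.update p k (p k + ε)) h (p h - ε)) := by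
  set q := Function.update (Function.update p k (p k + ε)) h (p h - ε) with hq
  have hkh' : k ≠ h := ne_of_lt hkh
  have hSq : ∀ m : Fin K, ∑ j ∈ Finset.Iio m, q j
      = (∑ j ∈ Finset.Iio m, p j) + (if k ∈ Finset.Iio m then ε else 0)
        - (if h ∈ Finset.Iio m then ε else 0) := fun m => sum_upd p ε k h hkh' _
  rw [← sub_nonneg, Fsum, Fsum, ← Finset.sum_sub_distrib]
  have hzero : ∀ m : Fin K, m ∉ ({k, h} : Finset (Fin K)) →
      (Real.log (((∑ j ∈ Finset.Iio m, q j) + q m) * g m + η)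
        - Real.log ((∑ j ∈ Finset.Iio m, q j) * g m + η))
      - (Real.log (((∑ j ∈ Finset.Iio m, p j) + p m) * g m + η)
        - Real.log ((∑ j ∈ Finset.Iio m, p j) * g m + η)) = 0 := by
    intro m hm
    simp only [Finset.mem_insert, Finset.mem_singleton, not_or] at hm
    have hqm : q m = p m := by
      simp [hq, Function.update_apply, hm.1, hm.2]
    have hiff : (k ∈ Finset.Iio m) ↔ (h ∈ Finset.Iio m) := by
      simp only [Finset.mem_Iio, Fin.lt_def]
      have h1 : (m : ℕ) ≠ (k : ℕ) := fun e => hm.1 (Fin.ext e)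
      have h2 : (m : ℕ) ≠ (h : ℕ) := fun e => hm.2 (Fin.ext e)
      omega
    have hSm : ∑ j ∈ Finset.Iio m, q j = ∑ j ∈ Finset.Iio m, p j := by
      rw [hSq m]
      by_cases hc : k ∈ Finset.Iio m
      · simp [hc, hiff.mp hc]
      · have hc2 : h ∉ Finset.Iio m := fun hh' => hc (hiff.mpr hh')
        simp [hc, hc2]
    rw [hqm, hSm]; ring
  rw [← Finset.sum_subset (Finset.subset_univ ({k, h} : Finset (Fin K))) (fun m _ hm => hzero m hm)]
  rw [Finset.sum_pair hkh']
  -- compute the four sums / values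
  have hqk : q k = p k + ε := by simp [hq, Function.update_apply, hkh']
  have hqh : q h = p h - ε := by simp [hq]
  have hSk : ∑ j ∈ Finset.Iio k, q j = ∑ j ∈ Finset.Iio k, p j := by
    rw [hSq k]
    have h1 : k ∉ Finset.Iio k := by simp
    have h2 : h ∉ Finset.Iio k := by simp [Finset.mem_Iio, not_lt, le_of_lt hkh]
    simp [h1, h2]
  have hSh : ∑ j ∈ Finset.Iio h, q j = (∑ j ∈ Finset.Iio h, p j) + ε := by
    rw [hSq h]
    have h1 : k ∈ Finset.Iio h := by simp [Finset.mem_Iio, hkh]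
    have h2 : h ∉ Finset.Iio h := by simp
    simp [h1, h2]
  have hIh : ∑ j ∈ Finset.Iio h, p j = (∑ j ∈ Finset.Iio k, p j) + p k := by
    have : Finset.Iio h = insert k (Finset.Iio k) := by
      ext j
      simp only [Finset.mem_Iio, Finset.mem_insert, Fin.lt_def, Fin.ext_iff]
      omega
    rw [this, Finset.sum_insert (by simp)]
    ring
  have hSnn : 0 ≤ (∑ j ∈ Finset.Iio k, p j) + p k :=
    add_nonneg (Finset.sum_nonneg fun j _ => hp0 j) (hp0 k)
  have hkey := key_log ((∑ j ∈ Finset.Iio k, p j) + p k) ε η (g k) (g h) hSnn hε hη (hg h)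
    (hsort k h (le_of_lt hkh))
  rw [hqk, hqh, hSk, hSh, hIh]
  have e1 : (∑ j ∈ Finset.Iio k, p j) + (p k + ε) = ((∑ j ∈ Finset.Iio k, p j) + p k) + ε := by ring
  have e2 : ((∑ j ∈ Finset.Iio k, p j) + p k + ε) + (p h - ε)
      = ((∑ j ∈ Finset.Iio k, p j) + p k) + p h := by ring
  rw [e1, e2]
  linarith [hkey]

private lemma exchange_gen (K : ℕ) (g : Fin K → ℝ) (η : ℝ)
    (hg : ∀ k, 0 < g k) (hsort : ∀ k l : Fin K, k ≤ l → g l ≤ g k) (hη : 0 < η)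
    (ε : ℝ) (hε : 0 < ε) :
    ∀ n : ℕ, ∀ p : Fin K → ℝ, (∀ j, 0 ≤ p j) → ∀ k h : Fin K, k < h →
      (h : ℕ) - (k : ℕ) ≤ n → ε ≤ p h →
      Fsum K g η p ≤ Fsum K g η (Function.update (Function.update p k (p k + ε)) h (p h - ε)) := by
  intro n
  induction n with
  | zero => intro p _ k h hkh hd _; exfalso; have := Fin.lt_def.mp hkh; omega
  | succ n ih =>
    intro p hp0 k h hkh hd hεh
    by_cases hadj : (h : ℕ) = (k : ℕ) + 1
    · exact adjacent K g η hg hsort hη p hp0 ε hε k h hkh hadj hεh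
    · have hklt : (k : ℕ) < (h : ℕ) := Fin.lt_def.mp hkh
      have hk1 : (k : ℕ) + 1 < K := lt_trans (by omega) h.isLt
      set k' : Fin K := ⟨(k : ℕ) + 1, hk1⟩ with hk'
      have hk'h : k' < h := by rw [Fin.lt_def]; simp [hk']; omega
      have hkk' : k < k' := by rw [Fin.lt_def]; simp [hk']
      set q := Function.update (Function.update p k' (p k' + ε)) h (p h - ε) with hqdef
      have hq0 : ∀ j, 0 ≤ q j := upd_nonneg p ε k' h hp0 hε.le hεh
      have step1 : Fsum K g η p ≤ Fsum K g η q :=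
        ih p hp0 k' h hk'h (by simp [hk']; omega) hεh
      have hqk' : q k' = p k' + ε := by
        simp [hqdef, Function.update_apply, ne_of_lt hk'h]
      have hεq : ε ≤ q k' := by rw [hqk']; linarith [hp0 k']
      have step2 : Fsum K g η q
          ≤ Fsum K g η (Function.update (Function.update q k (q k + ε)) k' (q k' - ε)) :=
        adjacent K g η hg hsort hη q hq0 ε hε k k' hkk' (by simp [hk']) hεq
      have hfinal : Function.update (Function.update q k (q k + ε)) k' (q k' - ε)
          = Function.update (Function.update p k (p k + ε)) h (p h - ε) := by
        have hkne : k ≠ k' := ne_of_lt hkk'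
        have hkneh : k ≠ h := ne_of_lt hkh
        have hk'ne : k' ≠ h := ne_of_lt hk'h
        have hqk : q k = p k := by
          simp [hqdef, Function.update_apply, hkneh, hkne]
        funext x
        by_cases hxk' : x = k'
        · subst hxk'
          simp [Function.update_apply, hk'ne, hqk', Ne.symm hkne]
        · by_cases hxk : x = k
          · subst hxk
            simp [Function.update_apply, hxk', hqk, hkneh, Ne.symm hxk']
          · by_cases hxh : x = h
            · subst hxh
              simp [Function.update_apply, hxk', hxk, hqdef, Ne.symm hk'ne]
            · simp [Function.update_apply, hxk', hxk, hxh, hqdef]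
      rw [← hfinal]
      exact le_trans step1 step2

/-- Exchange argument of Theorem 2: transferring a small amount of power from a
weaker user `h` to a stronger user `k < h` does not decrease the sum rate. -/
theorem noma_power_exchange (K : ℕ) (g P : Fin K → ℝ) (η : ℝ)
    (hg : ∀ k, 0 < g k) (hsort : ∀ k l : Fin K, k ≤ l → g l ≤ g k) (hη : 0 < η)
    (f : (Fin K → ℝ) → ℝ)
    (hf : ∀ p : Fin K → ℝ, f p =
      ∑ k : Fin K,
        Real.log (1 + p k * g k / ((∑ j ∈ Finset.Iio k, p j * g k) + η)))
    (p : Fin K → ℝ) (hp0 : ∀ k, 0 ≤ p k) (hpP : ∀ k, p k ≤ P k)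
    (k h : Fin K) (hkh : k < h) (hk : p k < P k) (hh : 0 < p h)
    (ε : ℝ) (hε : 0 < ε) (hεk : ε ≤ P k - p k) (hεh : ε ≤ p h) :
    f p ≤ f (Function.update (Function.update p k (p k + ε)) h (p h - ε)) := by
  set q := Function.update (Function.update p k (p k + ε)) h (p h - ε) with hqdef
  have hq0 : ∀ j, 0 ≤ q j := upd_nonneg p ε k h hp0 hε.le hεh
  rw [hf p, hf q, f_eq K g η hg hη p hp0, f_eq K g η hg hη q hq0]
  exact exchange_gen K g η hg hsort hη ε hε ((h : ℕ)) p hp0 k h hkh (by omega) hεh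
end

section
/- Under the dominant-user construction (one user k̄ with uniform gain 1 on all N subcarriers and weight e^{KN}, all other users with gains and weights at most e^{−KN}, per-user power limit 1, noise η = ε with 0 < ε < e^{−KN}), for any power budget 0 < p ≤ 1 the weighted rate e^{KN}·log(1 + p/ε) obtained by giving power p to user k̄ on one subcarrier strictly exceeds K·N·e^{−KN}·log(1 + e^{−KN}·p/ε), an upper bound on the total weighted rate achievable by distributing p among all other users over all subcarriers. -/
/-- Quantitative core of the NP-hardness reduction (Theorem 1): the dominant
user's weighted rate exceeds the bound on all other users' total weighted rate. -/
theorem noma_dominant_user (K N : ℕ) (hK : 1 ≤ K) (hN : 1 ≤ N)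
    (ε p : ℝ) (hε : 0 < ε) (hεlt : ε < Real.exp (-(K * N : ℝ)))
    (hp : 0 < p) (hp1 : p ≤ 1) :
    Real.exp (K * N : ℝ) * Real.log (1 + p / ε) >
      (K * N : ℝ) * Real.exp (-(K * N : ℝ)) *
        Real.log (1 + Real.exp (-(K * N : ℝ)) * p / ε) := by
  set c : ℝ := (K * N : ℝ) with hc
  have hc1 : (1 : ℝ) ≤ c := by
    have : (1 : ℕ) ≤ K * N := Nat.one_le_iff_ne_zero.mpr (by positivity)
    rw [hc]; exact_mod_cast this
  have hc0 : 0 < c := lt_of_lt_of_le one_pos hc1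
  have hpε : 0 < p / ε := div_pos hp hε
  have hlogpos : 0 < Real.log (1 + p / ε) := Real.log_pos (by linarith)
  have hexppos : 0 < Real.exp (-c) := Real.exp_pos _
  have hexple : Real.exp (-c) ≤ 1 := Real.exp_le_one_iff.mpr (by linarith)
  have hloc : Real.log (1 + Real.exp (-c) * p / ε) ≤ Real.log (1 + p / ε) := by
    apply Real.log_le_log (by positivity)
    have h1 : Real.exp (-c) * p ≤ p := by nlinarith
    gcongr
  have hclt : c < Real.exp c := by
    have := Real.add_one_le_exp c; linarith
  have hkey : c * Real.exp (-c) < Real.exp c := by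
    have h2 : c * Real.exp (-c) < Real.exp c * Real.exp (-c) := by nlinarith
    have h3 : Real.exp c * Real.exp (-c) = 1 := by
      rw [← Real.exp_add]; simp
    have : (1:ℝ) ≤ Real.exp c := Real.one_le_exp (le_of_lt hc0)
    linarith
  calc c * Real.exp (-c) * Real.log (1 + Real.exp (-c) * p / ε)
      ≤ c * Real.exp (-c) * Real.log (1 + p / ε) := by
        apply mul_le_mul_of_nonneg_left hloc (by positivity)
    _ < Real.exp c * Real.log (1 + p / ε) := by
        exact mul_lt_mul_of_pos_right hkey hlogpos
end
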